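/- In a consistent reaction system, the collection of semi-organizations, ordered by set inclusion, forms a lattice: any two semi-organizations U and V have a least upper bound and a greatest lower bound within the collection of semi-organizations. -/
import Mathlib


/-- A set `C` is closed: products of reactions whose reactants all lie in `C` lie in `C`. -/
def Closed {ι ρ : Type*} (re : ρ → Multiset ι × Multiset ι) (C : Set ι) : Prop :=
  ∀ r : ρ, (∀ a ∈ (re r).1, a ∈ C) → ∀ b ∈ (re r).2, b ∈ C

/-- Molecule `k` is produced within `C`. -/
def Produced {ι ρ : Type*} [DecidableEq ι] (re : ρ → Multiset ι × Multiset ι)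
    (C : Set ι) (k : ι) : Prop :=
  ∃ r : ρ, (∀ a ∈ (re r).1, a ∈ C) ∧ (re r).1.count k < (re r).2.count k

/-- Molecule `k` is used-up within `C`. -/
def UsedUp {ι ρ : Type*} [DecidableEq ι] (re : ρ → Multiset ι × Multiset ι)
    (C : Set ι) (k : ι) : Prop :=
  ∃ r : ρ, (∀ a ∈ (re r).1, a ∈ C) ∧ (re r).2.count k < (re r).1.count k

/-- `S` is self-maintaining. -/
def SelfMaintaining {ι ρ : Type*} [DecidableEq ι] (re : ρ → Multiset ι × Multiset ι)
    (S : Set ι) : Prop :=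
  ∀ k ∈ S, UsedUp re S k → Produced re S k

/-- A semi-organization is closed and self-maintaining. -/
def SemiOrganization {ι ρ : Type*} [DecidableEq ι] (re : ρ → Multiset ι × Multiset ι)
    (S : Set ι) : Prop :=
  Closed re S ∧ SelfMaintaining re S

/-- Entry of the stoichiometric matrix: products minus reactants multiplicity. -/
noncomputable def stoich {ι ρ : Type*} [DecidableEq ι] (re : ρ → Multiset ι × Multiset ι)
    (i : ι) (r : ρ) : ℝ :=
  ((re r).2.count i : ℝ) - ((re r).1.count i : ℝ)

/-- `C` is mass-maintaining. -/
def MassMaintaining {ι ρ : Type*} [DecidableEq ι] [Fintype ρ]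
    (re : ρ → Multiset ι × Multiset ι) (C : Set ι) : Prop :=
  ∃ v : ρ → ℝ,
    (∀ r : ρ, (∀ a ∈ (re r).1, a ∈ C) → 0 < v r) ∧
    (∀ r : ρ, ¬ (∀ a ∈ (re r).1, a ∈ C) → v r = 0) ∧
    (∀ i ∈ C, 0 ≤ ∑ r : ρ, stoich re i r * v r)

/-- An organization is closed and mass-maintaining. -/
def Organization {ι ρ : Type*} [DecidableEq ι] [Fintype ρ]
    (re : ρ → Multiset ι × Multiset ι) (O : Set ι) : Prop :=
  Closed re O ∧ MassMaintaining re O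

/-- The closure of `S`: the smallest closed set containing `S`. -/
def GCL {ι ρ : Type*} (re : ρ → Multiset ι × Multiset ι) (S : Set ι) : Set ι :=
  ⋂₀ {C : Set ι | Closed re C ∧ S ⊆ C}

/-- A catalytic flow system: every molecule has a dilution reaction `{k} → ∅`,
and no molecule is used-up by any other reaction. -/
def CatalyticFlow {ι ρ : Type*} [DecidableEq ι] (re : ρ → Multiset ι × Multiset ι) : Prop :=
  (∀ k : ι, ∃ r : ρ, re r = ({k}, (0 : Multiset ι))) ∧
  (∀ r : ρ, (¬ ∃ k : ι, re r = ({k}, (0 : Multiset ι))) →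
    ∀ k : ι, (re r).1.count k ≤ (re r).2.count k)

/-- A consistent reaction system with persistent molecules `P`. -/
def Consistent {ι ρ : Type*} [DecidableEq ι] (re : ρ → Multiset ι × Multiset ι)
    (P : Set ι) : Prop :=
  (∀ k : ι, k ∉ P → ∃ r : ρ, (re r).1 = {k} ∧ k ∉ (re r).2) ∧
  (∀ r : ρ, ∀ p ∈ P, (re r).1.count p ≤ (re r).2.count p)

/-- `S` is the largest self-maintaining subset of `C`. -/
def IsGSM {ι ρ : Type*} [DecidableEq ι] (re : ρ → Multiset ι × Multiset ι)
    (C S : Set ι) : Prop :=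
  S ⊆ C ∧ SelfMaintaining re S ∧ ∀ T : Set ι, T ⊆ C → SelfMaintaining re T → T ⊆ S

/-- `S` is the largest mass-maintaining subset of `C`. -/
def IsGMM {ι ρ : Type*} [DecidableEq ι] [Fintype ρ] (re : ρ → Multiset ι × Multiset ι)
    (C S : Set ι) : Prop :=
  S ⊆ C ∧ MassMaintaining re S ∧ ∀ T : Set ι, T ⊆ C → MassMaintaining re T → T ⊆ S

/-- An admissible flux function w.r.t. threshold `Φ`: nonnegative, and positive
exactly when all reactants are present (above threshold). -/
def Admissible {ι ρ : Type*} (re : ρ → Multiset ι × Multiset ι) (Φ : ℝ)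
    (v : (ι → ℝ) → ρ → ℝ) : Prop :=
  ∀ x : ι → ℝ, ∀ r : ρ, 0 ≤ v x r ∧ (0 < v x r ↔ ∀ a ∈ (re r).1, x a > Φ)

section Aux

variable {ι ρ : Type*} [DecidableEq ι] {re : ρ → Multiset ι × Multiset ι}

lemma subset_gcl (S : Set ι) : S ⊆ GCL re S := by
  intro x hx C hC
  exact hC.2 hx

lemma gcl_closed (S : Set ι) : Closed re (GCL re S) := by
  intro r hr b hb C hC
  exact hC.1 r (fun a ha => hr a ha C hC) b hb

lemma gcl_min {S C : Set ι} (hC : Closed re C) (hSC : S ⊆ C) : GCL re S ⊆ C :=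
  Set.sInter_subset_of_mem ⟨hC, hSC⟩

lemma produced_mono {S T : Set ι} (hST : S ⊆ T) {k : ι} (h : Produced re S k) :
    Produced re T k := by
  obtain ⟨r, hr, hc⟩ := h
  exact ⟨r, fun a ha => hST (hr a ha), hc⟩

lemma usedUp_not_persistent {P : Set ι} (h : Consistent re P) {S : Set ι} {k : ι}
    (hu : UsedUp re S k) : k ∉ P := by
  obtain ⟨r, -, hc⟩ := hu
  intro hk
  exact absurd (h.2 r k hk) (not_le.mpr hc)

lemma usedUp_of_not_persistent {P : Set ι} (h : Consistent re P) {S : Set ι} {k : ι}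
    (hk : k ∉ P) (hkS : k ∈ S) : UsedUp re S k := by
  obtain ⟨r, hr1, hr2⟩ := h.1 k hk
  refine ⟨r, ?_, ?_⟩
  · intro a ha
    rw [hr1, Multiset.mem_singleton] at ha
    exact ha ▸ hkS
  · rw [hr1, Multiset.count_singleton_self]
    have : (re r).2.count k = 0 := Multiset.count_eq_zero.mpr hr2
    omega

/-- Every element of the closure is either original or produced within the closure. -/
lemma gcl_mem_or_produced (S : Set ι) {k : ι} (hk : k ∈ GCL re S) :
    k ∈ S ∨ Produced re (GCL re S) k := by
  set T : Set ι := S ∪ {k | k ∈ GCL re S ∧ Produced re (GCL re S) k} with hT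
  have hTsub : T ⊆ GCL re S := by
    intro x hx
    rcases hx with hx | hx
    · exact subset_gcl S hx
    · exact hx.1
  have hclosed : Closed re T := by
    intro r hr b hb
    have hrG : ∀ a ∈ (re r).1, a ∈ GCL re S := fun a ha => hTsub (hr a ha)
    have hbG : b ∈ GCL re S := gcl_closed S r hrG b hb
    by_cases hc : (re r).1.count b < (re r).2.count b
    · exact Or.inr ⟨hbG, r, hrG, hc⟩
    · have h2 : 0 < (re r).2.count b := Multiset.count_pos.mpr hb
      have h1 : 0 < (re r).1.count b := by omega
      exact hr b (Multiset.count_pos.mp h1)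
  have : GCL re S ⊆ T := gcl_min hclosed (Set.subset_union_left)
  rcases this hk with h | h
  · exact Or.inl h
  · exact Or.inr h.2

lemma gcl_selfMaintaining {P : Set ι} (h : Consistent re P) {S : Set ι}
    (hS : SelfMaintaining re S) : SelfMaintaining re (GCL re S) := by
  intro k hk hu
  have hkP : k ∉ P := usedUp_not_persistent h hu
  rcases gcl_mem_or_produced S hk with hkS | hp
  · exact produced_mono (subset_gcl S)
      (hS k hkS (usedUp_of_not_persistent h hkP hkS))
  · exact hp

lemma sUnion_selfMaintaining {P : Set ι} (h : Consistent re P) {F : Set (Set ι)}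
    (hF : ∀ S ∈ F, SelfMaintaining re S) : SelfMaintaining re (⋃₀ F) := by
  intro k hk hu
  obtain ⟨S, hSF, hkS⟩ := hk
  have hkP : k ∉ P := usedUp_not_persistent h hu
  exact produced_mono (Set.subset_sUnion_of_mem hSF)
    (hF S hSF k hkS (usedUp_of_not_persistent h hkP hkS))

end Aux

/-- in a consistent reaction system, any two semi-organizations
have a least upper bound and a greatest lower bound among semi-organizations. -/
theorem stmt10 {ι ρ : Type*} [Fintype ι] [Fintype ρ] [DecidableEq ι]
    (re : ρ → Multiset ι × Multiset ι) (P : Set ι) (h : Consistent re P)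
    (U V : Set ι) (hU : SemiOrganization re U) (hV : SemiOrganization re V) :
    (∃ W : Set ι, SemiOrganization re W ∧ U ⊆ W ∧ V ⊆ W ∧
      ∀ W' : Set ι, SemiOrganization re W' → U ⊆ W' → V ⊆ W' → W ⊆ W') ∧
    (∃ W : Set ι, SemiOrganization re W ∧ W ⊆ U ∧ W ⊆ V ∧
      ∀ W' : Set ι, SemiOrganization re W' → W' ⊆ U → W' ⊆ V → W' ⊆ W) := by
  constructor
  · -- join: closure of the union
    refine ⟨GCL re (U ∪ V), ⟨gcl_closed _, ?_⟩, ?_, ?_, ?_⟩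
    · refine gcl_selfMaintaining h ?_
      have : U ∪ V = ⋃₀ {U, V} := by simp
      rw [this]
      exact sUnion_selfMaintaining h (by
        rintro S (rfl | rfl)
        · exact hU.2
        · exact hV.2)
    · exact (Set.subset_union_left).trans (subset_gcl _)
    · exact (Set.subset_union_right).trans (subset_gcl _)
    · intro W' hW' hUW' hVW'
      exact gcl_min hW'.1 (Set.union_subset hUW' hVW')
  · -- meet: closure of union of all semi-organizations inside U ∩ V
    set F : Set (Set ι) := {S | SemiOrganization re S ∧ S ⊆ U ∩ V} with hF
    have hUVclosed : Closed re (U ∩ V) := by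
      intro r hr b hb
      exact ⟨hU.1 r (fun a ha => (hr a ha).1) b hb, hV.1 r (fun a ha => (hr a ha).2) b hb⟩
    have hsub : ⋃₀ F ⊆ U ∩ V := Set.sUnion_subset (fun S hS => hS.2)
    refine ⟨GCL re (⋃₀ F), ⟨gcl_closed _, ?_⟩, ?_, ?_, ?_⟩
    · exact gcl_selfMaintaining h (sUnion_selfMaintaining h (fun S hS => hS.1.2))
    · exact (gcl_min hUVclosed hsub).trans Set.inter_subset_left
    · exact (gcl_min hUVclosed hsub).trans Set.inter_subset_right
    · intro W' hW' hW'U hW'V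
      exact (Set.subset_sUnion_of_mem (show W' ∈ F from
        ⟨hW', Set.subset_inter hW'U hW'V⟩)).trans (subset_gcl _)
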